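/- The weighted-hot encoding h : [0,L] → ℝ^{L+1} is 2-Lipschitz in the ℓ¹ norm: ‖h(s) - h(s')‖₁ ≤ 2|s - s'| for all s, s' ∈ [0,L]. -/
import Mathlib

/-- Weighted-hot encoding of a position `s ∈ [0,L]` into a vector indexed by `{0,…,L}`. -/
noncomputable def weightedHot (L : ℕ) (s : ℝ) : Fin (L + 1) → ℝ := fun k =>
  if (k : ℤ) = ⌊s⌋ then 1 - (s - ⌊s⌋)
  else if (k : ℤ) = ⌊s⌋ + 1 then s - ⌊s⌋
  else 0

lemma sum_ite_le_aux (L : ℕ) (m : ℤ) (c : ℝ) (hc : 0 ≤ c) :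
    ∑ k : Fin (L+1), (if (k:ℤ) = m then c else 0) ≤ c := by
  by_cases h : ∃ k0 : Fin (L+1), (k0:ℤ) = m
  · obtain ⟨k0, hk0⟩ := h
    have hiff : ∀ k : Fin (L+1), ((k:ℤ) = m) ↔ k = k0 := by
      intro k
      constructor
      · intro hk
        apply Fin.ext
        exact_mod_cast hk.trans hk0.symm
      · rintro rfl; exact hk0
    calc ∑ k : Fin (L+1), (if (k:ℤ) = m then c else 0)
        = ∑ k : Fin (L+1), (if k = k0 then c else 0) := by
          refine Finset.sum_congr rfl fun k _ => ?_
          simp [hiff k]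
      _ = c := by simp
      _ ≤ c := le_rfl
  · push_neg at h
    have : ∑ k : Fin (L+1), (if (k:ℤ) = m then c else 0) = 0 :=
      Finset.sum_eq_zero fun k _ => if_neg (h k)
    rw [this]; exact hc

lemma abs_weightedHot_sum_le (L : ℕ) (s : ℝ) :
    ∑ k, |weightedHot L s k| ≤ 1 := by
  have hf0 : (⌊s⌋ : ℝ) ≤ s := Int.floor_le s
  have hf1 : s < ⌊s⌋ + 1 := Int.lt_floor_add_one s
  have hpt : ∀ k : Fin (L+1), |weightedHot L s k| ≤
      (if (k:ℤ) = ⌊s⌋ then (1 - (s - ⌊s⌋)) else 0) +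
      (if (k:ℤ) = ⌊s⌋ + 1 then (s - ⌊s⌋) else 0) := by
    intro k
    simp only [weightedHot]
    split_ifs <;>
      first
        | (exfalso; omega)
        | (rw [abs_le]; constructor <;> (push_cast; linarith))
  calc ∑ k, |weightedHot L s k|
      ≤ ∑ k : Fin (L+1), ((if (k:ℤ) = ⌊s⌋ then (1 - (s - ⌊s⌋)) else 0) +
          (if (k:ℤ) = ⌊s⌋ + 1 then (s - ⌊s⌋) else 0)) :=
        Finset.sum_le_sum fun k _ => hpt k
    _ = (∑ k : Fin (L+1), (if (k:ℤ) = ⌊s⌋ then (1 - (s - ⌊s⌋)) else 0)) +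
        (∑ k : Fin (L+1), (if (k:ℤ) = ⌊s⌋ + 1 then (s - ⌊s⌋) else 0)) :=
        Finset.sum_add_distrib
    _ ≤ (1 - (s - ⌊s⌋)) + (s - ⌊s⌋) := by
        gcongr <;> exact sum_ite_le_aux L _ _ (by linarith)
    _ = 1 := by ring

lemma weightedHot_key (L : ℕ) (s s' : ℝ) (hle : s' ≤ s) :
    ∑ k, |weightedHot L s k - weightedHot L s' k| ≤ 2 * (s - s') := by
  have hf0 : (⌊s⌋ : ℝ) ≤ s := Int.floor_le s
  have hf1 : s < ⌊s⌋ + 1 := Int.lt_floor_add_one s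
  have hg0 : (⌊s'⌋ : ℝ) ≤ s' := Int.floor_le s'
  have hg1 : s' < ⌊s'⌋ + 1 := Int.lt_floor_add_one s'
  rcases le_or_gt 1 (s - s') with hbig | hsmall
  · calc ∑ k, |weightedHot L s k - weightedHot L s' k|
        ≤ ∑ k : Fin (L+1), (|weightedHot L s k| + |weightedHot L s' k|) :=
          Finset.sum_le_sum fun k _ => abs_sub _ _
      _ = (∑ k, |weightedHot L s k|) + (∑ k, |weightedHot L s' k|) :=
          Finset.sum_add_distrib
      _ ≤ 1 + 1 := add_le_add (abs_weightedHot_sum_le L s) (abs_weightedHot_sum_le L s')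
      _ ≤ 2 * (s - s') := by linarith
  · have hfl1 : ⌊s'⌋ ≤ ⌊s⌋ := Int.floor_le_floor hle
    have hfl2 : ⌊s⌋ ≤ ⌊s'⌋ + 1 := by
      have : ⌊s⌋ ≤ ⌊s' + 1⌋ := Int.floor_le_floor (by linarith)
      simpa [Int.floor_add_one] using this
    have hcase : ⌊s⌋ = ⌊s'⌋ ∨ ⌊s⌋ = ⌊s'⌋ + 1 := by omega
    rcases hcase with heq | heq
    · -- same floor
      have hcastr : (⌊s⌋ : ℝ) = (⌊s'⌋ : ℝ) := by exact_mod_cast heq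
      have hpt : ∀ k : Fin (L+1), |weightedHot L s k - weightedHot L s' k| ≤
          (if (k:ℤ) = ⌊s'⌋ then (s - s') else 0) +
          (if (k:ℤ) = ⌊s'⌋ + 1 then (s - s') else 0) := by
        intro k
        simp only [weightedHot, heq, hcastr]
        split_ifs <;>
          first
            | (exfalso; omega)
            | (rw [abs_le]; constructor <;> (push_cast; linarith))
      calc ∑ k, |weightedHot L s k - weightedHot L s' k|
          ≤ ∑ k : Fin (L+1), ((if (k:ℤ) = ⌊s'⌋ then (s - s') else 0) +
              (if (k:ℤ) = ⌊s'⌋ + 1 then (s - s') else 0)) :=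
            Finset.sum_le_sum fun k _ => hpt k
        _ = (∑ k : Fin (L+1), (if (k:ℤ) = ⌊s'⌋ then (s - s') else 0)) +
            (∑ k : Fin (L+1), (if (k:ℤ) = ⌊s'⌋ + 1 then (s - s') else 0)) :=
            Finset.sum_add_distrib
        _ ≤ (s - s') + (s - s') := by
            gcongr <;> exact sum_ite_le_aux L _ _ (by linarith)
        _ = 2 * (s - s') := by ring
    · -- floor differs by one
      have hcastr : (⌊s⌋ : ℝ) = (⌊s'⌋ : ℝ) + 1 := by exact_mod_cast heq
      have hfs0 : 0 ≤ s - ((⌊s'⌋:ℝ) + 1) := by linarith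
      have hfs1 : s - ((⌊s'⌋:ℝ) + 1) < 1 := by linarith
      set c2 : ℝ := |(1 - (s - ((⌊s'⌋:ℝ) + 1))) - (s' - ⌊s'⌋)| with hc2
      have hpt : ∀ k : Fin (L+1), |weightedHot L s k - weightedHot L s' k| ≤
          (if (k:ℤ) = ⌊s'⌋ then (1 - (s' - ⌊s'⌋)) else 0) +
          ((if (k:ℤ) = ⌊s'⌋ + 1 then c2 else 0) +
           (if (k:ℤ) = ⌊s'⌋ + 2 then (s - ((⌊s'⌋:ℝ) + 1)) else 0)) := by
        intro k
        have habs1 := le_abs_self ((1 - (s - ((⌊s'⌋:ℝ) + 1))) - (s' - ⌊s'⌋))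
        have habs2 := neg_abs_le ((1 - (s - ((⌊s'⌋:ℝ) + 1))) - (s' - ⌊s'⌋))
        simp only [weightedHot, heq, hcastr, hc2]
        split_ifs <;>
          first
            | (exfalso; omega)
            | (rw [abs_le]; constructor <;> (push_cast; linarith))
      have hc2nn : 0 ≤ c2 := abs_nonneg _
      calc ∑ k, |weightedHot L s k - weightedHot L s' k|
          ≤ ∑ k : Fin (L+1), ((if (k:ℤ) = ⌊s'⌋ then (1 - (s' - ⌊s'⌋)) else 0) +
              ((if (k:ℤ) = ⌊s'⌋ + 1 then c2 else 0) +
               (if (k:ℤ) = ⌊s'⌋ + 2 then (s - ((⌊s'⌋:ℝ) + 1)) else 0))) :=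
            Finset.sum_le_sum fun k _ => hpt k
        _ = (∑ k : Fin (L+1), (if (k:ℤ) = ⌊s'⌋ then (1 - (s' - ⌊s'⌋)) else 0)) +
            ((∑ k : Fin (L+1), (if (k:ℤ) = ⌊s'⌋ + 1 then c2 else 0)) +
             (∑ k : Fin (L+1), (if (k:ℤ) = ⌊s'⌋ + 2 then (s - ((⌊s'⌋:ℝ) + 1)) else 0))) := by
            rw [Finset.sum_add_distrib, Finset.sum_add_distrib]
        _ ≤ (1 - (s' - ⌊s'⌋)) + (c2 + (s - ((⌊s'⌋:ℝ) + 1))) := by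
            gcongr <;> exact sum_ite_le_aux L _ _ (by linarith)
        _ ≤ 2 * (s - s') := by
            rcases abs_cases ((1 - (s - ((⌊s'⌋:ℝ) + 1))) - (s' - ⌊s'⌋)) with ⟨h, _⟩ | ⟨h, _⟩ <;>
              rw [hc2, h] <;> linarith

theorem weightedHot_two_lipschitz_l1 (L : ℕ) (hL : 0 < L) :
    ∀ s ∈ Set.Icc (0:ℝ) L, ∀ s' ∈ Set.Icc (0:ℝ) L,
      ∑ k, |weightedHot L s k - weightedHot L s' k| ≤ 2 * |s - s'| := by
  intro s _ s' _
  rcases le_total s' s with hle | hle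
  · rw [abs_of_nonneg (by linarith)]
    exact weightedHot_key L s s' hle
  · rw [abs_sub_comm, abs_of_nonneg (by linarith)]
    calc ∑ k, |weightedHot L s k - weightedHot L s' k|
        = ∑ k, |weightedHot L s' k - weightedHot L s k| :=
          Finset.sum_congr rfl fun k _ => abs_sub_comm _ _
      _ ≤ 2 * (s' - s) := weightedHot_key L s' s hle
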